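/- arXiv:2405.16411 — 5 statements merged into one kernel-verified Lean document; each statement's English description precedes it below -/
import Mathlib

section
/- Distribution rule for ⊖, ⊘ and matrix product: for any U1 ∈ ℝ^{n1×d}, U2 ∈ ℝ^{n1×k}, V1 ∈ ℝ^{n2×d}, V2 ∈ ℝ^{n2×k}, W1 ∈ ℝ^{n3×d}, W2 ∈ ℝ^{n3×k}, it holds that (U1 ⊖ U2) · ((V1 ⊖ V2) ⊘ (W1 ⊖ W2))^⊤ = (U1 (V1 ⊘ W1)^⊤) ∘ (U2 (V2 ⊘ W2)^⊤) as matrices in ℝ^{n1 × n2 n3}. -/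
open Matrix

/-- Column-wise Kronecker product `⊘`: `(K1 ⊘ K2) (i1, i2) j = K1 i1 j * K2 i2 j`. -/
def colKron {α β γ : Type*} (K1 : Matrix α γ ℝ) (K2 : Matrix β γ ℝ) :
    Matrix (α × β) γ ℝ :=
  Matrix.of fun i j => K1 i.1 j * K2 i.2 j

/-- Row-wise Kronecker product `⊖`: `(K1 ⊖ K2) i (j1, j2) = K1 i j1 * K2 i j2`. -/
def rowKron {α γ δ : Type*} (K1 : Matrix α γ ℝ) (K2 : Matrix α δ ℝ) :
    Matrix α (γ × δ) ℝ :=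
  Matrix.of fun i j => K1 i j.1 * K2 i j.2

/-- Distribution rule for `⊖`, `⊘` and matrix product:
`(U1 ⊖ U2) · ((V1 ⊖ V2) ⊘ (W1 ⊖ W2))ᵀ = (U1 (V1 ⊘ W1)ᵀ) ∘ (U2 (V2 ⊘ W2)ᵀ)`
in `ℝ^{n1 × n2 n3}`, where `∘` is the Hadamard product. -/
theorem distribution_rule_ominus_oslash {n1 n2 n3 d k : ℕ}
    (U1 : Matrix (Fin n1) (Fin d) ℝ) (U2 : Matrix (Fin n1) (Fin k) ℝ)
    (V1 : Matrix (Fin n2) (Fin d) ℝ) (V2 : Matrix (Fin n2) (Fin k) ℝ)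
    (W1 : Matrix (Fin n3) (Fin d) ℝ) (W2 : Matrix (Fin n3) (Fin k) ℝ) :
    rowKron U1 U2 * (colKron (rowKron V1 V2) (rowKron W1 W2))ᵀ =
      (U1 * (colKron V1 W1)ᵀ).hadamard (U2 * (colKron V2 W2)ᵀ) := by
  ext i j
  simp only [mul_apply, hadamard_apply, transpose_apply, colKron, rowKron, of_apply,
    Fintype.sum_prod_type, Finset.sum_mul_sum]
  refine Finset.sum_congr rfl fun j1 _ => Finset.sum_congr rfl fun j2 _ => by ring
end

section
/- Derivative of the attention output entry: in the setting of the definitions below, for every i ∈ [d³], j0 ∈ [n], and i0 ∈ [d], the partial derivative of V(x)_{j0,i0} := ⟨F(x)_{j0}, H_{i0}⟩ − E_{j0,i0} with respect to x_i equals ⟨𝖠_{j0,i} ∘ F(x)_{j0}, H_{i0}⟩ − ⟨F(x)_{j0}, H_{i0}⟩ · ⟨𝖠_{j0,i}, F(x)_{j0}⟩. -/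
open Matrix

/-- The sub-block `𝖠_{j0} ∈ ℝ^{n²×d³}` of the triple Kronecker product
`𝖠 = A1 ⊗ A2 ⊗ A3 ∈ ℝ^{n³×d³}` consisting of the rows whose first (major) index is `j0`:
`(𝖠_{j0}) (i2, i3) (a, b, c) = A1 j0 a * A2 i2 b * A3 i3 c`. -/
def Ablock {n d : ℕ} (A1 A2 A3 : Matrix (Fin n) (Fin d) ℝ) (j0 : Fin n) :
    Matrix (Fin n × Fin n) (Fin d × Fin d × Fin d) ℝ :=
  Matrix.of fun p q => A1 j0 q.1 * A2 p.1 q.2.1 * A3 p.2 q.2.2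

/-- `K(x)_{j0} := exp(𝖠_{j0} x) ∈ ℝ^{n²}` (entrywise exponential). -/
noncomputable def Kfun {n d : ℕ} (A1 A2 A3 : Matrix (Fin n) (Fin d) ℝ)
    (x : Fin d × Fin d × Fin d → ℝ) (j0 : Fin n) : Fin n × Fin n → ℝ :=
  fun p => Real.exp ((Ablock A1 A2 A3 j0).mulVec x p)

/-- `α(x)_{j0} := ⟨exp(𝖠_{j0} x), 1_{n²}⟩`. -/
noncomputable def alphaFun {n d : ℕ} (A1 A2 A3 : Matrix (Fin n) (Fin d) ℝ)
    (x : Fin d × Fin d × Fin d → ℝ) (j0 : Fin n) : ℝ :=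
  ∑ p, Kfun A1 A2 A3 x j0 p

/-- `F(x)_{j0} := α(x)_{j0}⁻¹ K(x)_{j0} ∈ ℝ^{n²}`. -/
noncomputable def Ffun {n d : ℕ} (A1 A2 A3 : Matrix (Fin n) (Fin d) ℝ)
    (x : Fin d × Fin d × Fin d → ℝ) (j0 : Fin n) : Fin n × Fin n → ℝ :=
  fun p => (alphaFun A1 A2 A3 x j0)⁻¹ * Kfun A1 A2 A3 x j0 p

/-- Derivative of the attention output entry: the partial derivative of
`V(x)_{j0,i0} := ⟨F(x)_{j0}, H_{i0}⟩ − E_{j0,i0}` with respect to `x_i` equals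
`⟨𝖠_{j0,i} ∘ F(x)_{j0}, H_{i0}⟩ − ⟨F(x)_{j0}, H_{i0}⟩ · ⟨𝖠_{j0,i}, F(x)_{j0}⟩`. -/
theorem attention_entry_derivative {n d : ℕ} (A1 A2 A3 : Matrix (Fin n) (Fin d) ℝ)
    (H : Matrix (Fin n × Fin n) (Fin d) ℝ) (E : Matrix (Fin n) (Fin d) ℝ)
    (x : Fin d × Fin d × Fin d → ℝ) (i : Fin d × Fin d × Fin d) (j0 : Fin n) (i0 : Fin d) :
    HasDerivAt
      (fun t : ℝ =>
        (∑ p, Ffun A1 A2 A3 (Function.update x i t) j0 p * H p i0) - E j0 i0)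
      ((∑ p, (Ablock A1 A2 A3 j0 p i * Ffun A1 A2 A3 x j0 p) * H p i0)
        - (∑ p, Ffun A1 A2 A3 x j0 p * H p i0)
          * (∑ p, Ablock A1 A2 A3 j0 p i * Ffun A1 A2 A3 x j0 p))
      (x i) := by
  classical
  set A := Ablock A1 A2 A3 j0 with hA
  set K := Kfun A1 A2 A3 x j0 with hK0
  set α := alphaFun A1 A2 A3 x j0 with hα0
  have hαt : ∀ t, 0 < alphaFun A1 A2 A3 (Function.update x i t) j0 := by
    intro t
    have hne : (Finset.univ : Finset (Fin n × Fin n)).Nonempty := ⟨(j0, j0), by simp⟩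
    exact Finset.sum_pos (fun p _ => Real.exp_pos _) hne
  have hαpos : 0 < α := by
    have := hαt (x i)
    rwa [Function.update_eq_self] at this
  have hαne : α ≠ 0 := ne_of_gt hαpos
  -- derivative of the linear map
  have hlin : ∀ p : Fin n × Fin n,
      HasDerivAt (fun t => A.mulVec (Function.update x i t) p) (A p i) (x i) := by
    intro p
    have h1 : HasDerivAt (fun t => ∑ q, A p q * Function.update x i t q)
        (∑ q, if q = i then A p q else 0) (x i) := by
      apply HasDerivAt.fun_sum
      intro q _
      by_cases hq : q = i
      · subst hq
        simp only [if_pos rfl]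
        simpa [Function.update_self] using (hasDerivAt_id (x q)).const_mul (A p q)
      · simp only [Function.update_of_ne hq, if_neg hq]
        exact hasDerivAt_const _ _
    have h2 : (∑ q, if q = i then A p q else 0) = A p i := by
      simp [Finset.sum_ite_eq' Finset.univ i (fun q => A p q)]
    rw [h2] at h1
    exact h1
  -- derivative of K components
  have hKd : ∀ p : Fin n × Fin n,
      HasDerivAt (fun t => Kfun A1 A2 A3 (Function.update x i t) j0 p)
        (A p i * K p) (x i) := by
    intro p
    have := (hlin p).exp
    simp only [Function.update_eq_self] at this
    simpa [Kfun, hK0, hA, mul_comm] using this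
  -- derivative of alpha
  have hαd : HasDerivAt (fun t => alphaFun A1 A2 A3 (Function.update x i t) j0)
      (∑ p, A p i * K p) (x i) := by
    unfold alphaFun
    exact HasDerivAt.fun_sum (fun p _ => hKd p)
  set α' := ∑ p, A p i * K p with hα'0
  -- derivative of each F component times H
  have hFd : ∀ p : Fin n × Fin n,
      HasDerivAt (fun t => Ffun A1 A2 A3 (Function.update x i t) j0 p * H p i0)
        (((-α' / α ^ 2) * K p + α⁻¹ * (A p i * K p)) * H p i0) (x i) := by
    intro p
    have hinv' : HasDerivAt (fun t => (alphaFun A1 A2 A3 (Function.update x i t) j0)⁻¹)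
        (-α' / α ^ 2) (x i) := by
      have h := hαd.inv (by
        rw [Function.update_eq_self]; exact hαne)
      simpa [hα0, Function.update_eq_self, Pi.inv_def] using h
    have hmul := hinv'.mul (hKd p)
    have : Kfun A1 A2 A3 (Function.update x i (x i)) j0 p = K p := by
      rw [Function.update_eq_self]
    rw [this] at hmul
    have := hmul.mul_const (H p i0)
    simpa [Ffun] using this
  have hsum : HasDerivAt
      (fun t => (∑ p, Ffun A1 A2 A3 (Function.update x i t) j0 p * H p i0) - E j0 i0)
      (∑ p, ((-α' / α ^ 2) * K p + α⁻¹ * (A p i * K p)) * H p i0) (x i) :=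
    (HasDerivAt.fun_sum (fun p _ => hFd p)).sub_const _
  convert hsum using 1
  have hF : ∀ p, Ffun A1 A2 A3 x j0 p = α⁻¹ * K p := fun p => rfl
  simp only [hF]
  have e1 : (∑ p, A p i * (α⁻¹ * K p) * H p i0)
      = α⁻¹ * ∑ p, A p i * K p * H p i0 := by
    rw [Finset.mul_sum]; exact Finset.sum_congr rfl (fun p _ => by ring)
  have e2 : (∑ p, α⁻¹ * K p * H p i0) = α⁻¹ * ∑ p, K p * H p i0 := by
    rw [Finset.mul_sum]; exact Finset.sum_congr rfl (fun p _ => by ring)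
  have e3 : (∑ p, A p i * (α⁻¹ * K p)) = α⁻¹ * α' := by
    rw [hα'0, Finset.mul_sum]; exact Finset.sum_congr rfl (fun p _ => by ring)
  have e4 : (∑ p, ((-α' / α ^ 2) * K p + α⁻¹ * (A p i * K p)) * H p i0)
      = (-α' / α ^ 2) * (∑ p, K p * H p i0) + α⁻¹ * (∑ p, A p i * K p * H p i0) := by
    rw [Finset.mul_sum, Finset.mul_sum, ← Finset.sum_add_distrib]
    exact Finset.sum_congr rfl (fun p _ => by ring)
  rw [e1, e2, e3, e4]
  field_simp
  ring
end

section
/- Closed form of the tensor attention gradient: in the setting of the definitions below, define Loss(x) := Σ_{j0=1}^n Σ_{i0=1}^d 0.5 · V(x)_{j0,i0}², where V(x)_{j0,i0} := ⟨F(x)_{j0}, H_{i0}⟩ − E_{j0,i0}. Define W(x)_{j0} := Σ_{i0=1}^d V(x)_{j0,i0} H_{i0} ∈ ℝ^{n²} and P(x)_{j0} := (diag(F(x)_{j0}) − F(x)_{j0} F(x)_{j0}^⊤) W(x)_{j0} ∈ ℝ^{n²}, and let P(x) ∈ ℝ^{n×n²} be the matrix whose j0-th row is P(x)_{j0}^⊤.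 Then the gradient of Loss with respect to x ∈ ℝ^{d³} satisfies dLoss(x)/dx = vec(A1^⊤ P(x) (A2 ⊗ A3)) ∈ ℝ^{d³}. -/
open Matrix

/-- Kronecker product `⊗`: `(K1 ⊗ K2) (i1, i2) (j1, j2) = K1 i1 j1 * K2 i2 j2`. -/
def kron {α β γ δ : Type*} (K1 : Matrix α γ ℝ) (K2 : Matrix β δ ℝ) :
    Matrix (α × β) (γ × δ) ℝ :=
  Matrix.of fun i j => K1 i.1 j.1 * K2 i.2 j.2

/-- `V(x)_{j0,i0} := ⟨F(x)_{j0}, H_{i0}⟩ − E_{j0,i0}`. -/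
noncomputable def Vval {n d : ℕ} (A1 A2 A3 : Matrix (Fin n) (Fin d) ℝ)
    (H : Matrix (Fin n × Fin n) (Fin d) ℝ) (E : Matrix (Fin n) (Fin d) ℝ)
    (x : Fin d × Fin d × Fin d → ℝ) (j0 : Fin n) (i0 : Fin d) : ℝ :=
  (∑ p, Ffun A1 A2 A3 x j0 p * H p i0) - E j0 i0

/-- `W(x)_{j0} := Σ_{i0} V(x)_{j0,i0} H_{i0} ∈ ℝ^{n²}`. -/
noncomputable def Wvec {n d : ℕ} (A1 A2 A3 : Matrix (Fin n) (Fin d) ℝ)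
    (H : Matrix (Fin n × Fin n) (Fin d) ℝ) (E : Matrix (Fin n) (Fin d) ℝ)
    (x : Fin d × Fin d × Fin d → ℝ) (j0 : Fin n) : Fin n × Fin n → ℝ :=
  fun p => ∑ i0, Vval A1 A2 A3 H E x j0 i0 * H p i0

/-- `P(x)_{j0} := (diag(F(x)_{j0}) − F(x)_{j0} F(x)_{j0}ᵀ) W(x)_{j0} ∈ ℝ^{n²}`. -/
noncomputable def Pvec {n d : ℕ} (A1 A2 A3 : Matrix (Fin n) (Fin d) ℝ)
    (H : Matrix (Fin n × Fin n) (Fin d) ℝ) (E : Matrix (Fin n) (Fin d) ℝ)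
    (x : Fin d × Fin d × Fin d → ℝ) (j0 : Fin n) : Fin n × Fin n → ℝ :=
  (Matrix.diagonal (Ffun A1 A2 A3 x j0)
    - Matrix.vecMulVec (Ffun A1 A2 A3 x j0) (Ffun A1 A2 A3 x j0)).mulVec
      (Wvec A1 A2 A3 H E x j0)

/-- `P(x) ∈ ℝ^{n×n²}` is the matrix whose `j0`-th row is `P(x)_{j0}ᵀ`. -/
noncomputable def Pmat {n d : ℕ} (A1 A2 A3 : Matrix (Fin n) (Fin d) ℝ)
    (H : Matrix (Fin n × Fin n) (Fin d) ℝ) (E : Matrix (Fin n) (Fin d) ℝ)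
    (x : Fin d × Fin d × Fin d → ℝ) : Matrix (Fin n) (Fin n × Fin n) ℝ :=
  Matrix.of fun j0 p => Pvec A1 A2 A3 H E x j0 p

/-- `Loss(x) := Σ_{j0} Σ_{i0} 0.5 · V(x)_{j0,i0}²`. -/
noncomputable def Loss {n d : ℕ} (A1 A2 A3 : Matrix (Fin n) (Fin d) ℝ)
    (H : Matrix (Fin n × Fin n) (Fin d) ℝ) (E : Matrix (Fin n) (Fin d) ℝ)
    (x : Fin d × Fin d × Fin d → ℝ) : ℝ :=
  ∑ j0, ∑ i0, 0.5 * (Vval A1 A2 A3 H E x j0 i0) ^ 2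


private lemma key_scalar {ι : Type*} [Fintype ι] (α : ℝ) (hα : α ≠ 0) (a K W : ι → ℝ) :
    (∑ p, (-(∑ q, a q * K q) / α ^ 2 * K p + α⁻¹ * (a p * K p)) * W p)
    = ∑ p, a p * ((α⁻¹ * K p) * W p - (α⁻¹ * K p) * ∑ q, (α⁻¹ * K q) * W q) := by
  classical
  set S1 := ∑ p, a p * K p * W p with hS1
  set S2 := ∑ p, K p * W p with hS2
  set S3 := ∑ p, a p * K p with hS3
  have e1 : (∑ p, (-S3 / α ^ 2 * K p + α⁻¹ * (a p * K p)) * W p)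
      = -S3 / α ^ 2 * S2 + α⁻¹ * S1 := by
    rw [hS1, hS2, Finset.mul_sum, Finset.mul_sum, ← Finset.sum_add_distrib]
    exact Finset.sum_congr rfl fun p _ => by ring
  have e2 : (∑ q, (α⁻¹ * K q) * W q) = α⁻¹ * S2 := by
    rw [hS2, Finset.mul_sum]
    exact Finset.sum_congr rfl fun q _ => by ring
  have e3 : (∑ p, a p * ((α⁻¹ * K p) * W p - (α⁻¹ * K p) * (α⁻¹ * S2)))
      = α⁻¹ * S1 - α⁻¹ * (α⁻¹ * S2) * S3 := by
    have h1 : ∀ p, a p * ((α⁻¹ * K p) * W p - (α⁻¹ * K p) * (α⁻¹ * S2))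
        = α⁻¹ * (a p * K p * W p) - α⁻¹ * (α⁻¹ * S2) * (a p * K p) := fun p => by ring
    simp only [h1]
    rw [Finset.sum_sub_distrib, ← Finset.mul_sum, ← Finset.mul_sum, ← hS1, ← hS3]
  rw [e1]
  simp only [e2]
  rw [e3]
  field_simp
  ring

/-- Closed form of the tensor attention gradient:
`dLoss(x)/dx = vec(A1ᵀ P(x) (A2 ⊗ A3)) ∈ ℝ^{d³}`, stated coordinatewise: for every
coordinate `i`, the partial derivative of `Loss` at `x` in coordinate `i` equals the
`i`-th entry of `vec(A1ᵀ P(x) (A2 ⊗ A3))`. -/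
theorem tensor_attention_gradient {n d : ℕ} (A1 A2 A3 : Matrix (Fin n) (Fin d) ℝ)
    (H : Matrix (Fin n × Fin n) (Fin d) ℝ) (E : Matrix (Fin n) (Fin d) ℝ)
    (x : Fin d × Fin d × Fin d → ℝ) (i : Fin d × Fin d × Fin d) :
    HasDerivAt (fun t : ℝ => Loss A1 A2 A3 H E (Function.update x i t))
      ((A1ᵀ * Pmat A1 A2 A3 H E x * kron A2 A3) i.1 i.2) (x i) := by

  classical
  -- derivative of the linear part
  have hlin : ∀ (j0 : Fin n) (p : Fin n × Fin n),
      HasDerivAt (fun t => (Ablock A1 A2 A3 j0).mulVec (Function.update x i t) p)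
        (Ablock A1 A2 A3 j0 p i) (x i) := by
    intro j0 p
    have h2 : HasDerivAt
        (fun t => ∑ q, Ablock A1 A2 A3 j0 p q * Function.update x i t q)
        (∑ q, if q = i then Ablock A1 A2 A3 j0 p q else 0) (x i) := by
      apply HasDerivAt.fun_sum
      intro q _
      by_cases hq : q = i
      · subst hq
        simpa [Function.update_self] using
          ((hasDerivAt_id (x q)).const_mul (Ablock A1 A2 A3 j0 p q))
      · simpa [Function.update_of_ne hq, hq] using
          hasDerivAt_const (x i) (Ablock A1 A2 A3 j0 p q * x q)
    have h3 : (∑ q, if q = i then Ablock A1 A2 A3 j0 p q else 0)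
        = Ablock A1 A2 A3 j0 p i := by
      simp
    rw [h3] at h2
    simpa [Matrix.mulVec, dotProduct] using h2
  have hK : ∀ (j0 : Fin n) (p : Fin n × Fin n),
      HasDerivAt (fun t => Kfun A1 A2 A3 (Function.update x i t) j0 p)
        (Ablock A1 A2 A3 j0 p i * Kfun A1 A2 A3 x j0 p) (x i) := by
    intro j0 p
    have := (hlin j0 p).exp
    simpa [Kfun, Function.update_eq_self, mul_comm] using this
  have hαpos : ∀ (y : Fin d × Fin d × Fin d → ℝ) (j0 : Fin n),
      0 < alphaFun A1 A2 A3 y j0 := by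
    intro y j0
    exact Finset.sum_pos (fun p _ => Real.exp_pos _) ⟨(j0, j0), Finset.mem_univ _⟩
  have hα : ∀ j0 : Fin n,
      HasDerivAt (fun t => alphaFun A1 A2 A3 (Function.update x i t) j0)
        (∑ p, Ablock A1 A2 A3 j0 p i * Kfun A1 A2 A3 x j0 p) (x i) := by
    intro j0
    unfold alphaFun
    exact HasDerivAt.fun_sum fun p _ => hK j0 p
  have hF : ∀ (j0 : Fin n) (p : Fin n × Fin n),
      HasDerivAt (fun t => Ffun A1 A2 A3 (Function.update x i t) j0 p)
        (-(∑ q, Ablock A1 A2 A3 j0 q i * Kfun A1 A2 A3 x j0 q)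
            / (alphaFun A1 A2 A3 x j0) ^ 2 * Kfun A1 A2 A3 x j0 p
          + (alphaFun A1 A2 A3 x j0)⁻¹
            * (Ablock A1 A2 A3 j0 p i * Kfun A1 A2 A3 x j0 p)) (x i) := by
    intro j0 p
    have hne : alphaFun A1 A2 A3 (Function.update x i (x i)) j0 ≠ 0 := by
      rw [Function.update_eq_self]; exact (hαpos x j0).ne'
    have hinv := (hα j0).fun_inv hne
    have := hinv.fun_mul (hK j0 p)
    simpa [Ffun, Function.update_eq_self] using this
  have hV : ∀ (j0 : Fin n) (i0 : Fin d),
      HasDerivAt (fun t => Vval A1 A2 A3 H E (Function.update x i t) j0 i0)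
        (∑ p, (-(∑ q, Ablock A1 A2 A3 j0 q i * Kfun A1 A2 A3 x j0 q)
              / (alphaFun A1 A2 A3 x j0) ^ 2 * Kfun A1 A2 A3 x j0 p
            + (alphaFun A1 A2 A3 x j0)⁻¹
              * (Ablock A1 A2 A3 j0 p i * Kfun A1 A2 A3 x j0 p)) * H p i0) (x i) := by
    intro j0 i0
    unfold Vval
    exact (HasDerivAt.fun_sum fun p _ => (hF j0 p).mul_const (H p i0)).sub_const (E j0 i0)
  have hL : HasDerivAt (fun t => Loss A1 A2 A3 H E (Function.update x i t))
      (∑ j0, ∑ i0, Vval A1 A2 A3 H E x j0 i0 *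
        (∑ p, (-(∑ q, Ablock A1 A2 A3 j0 q i * Kfun A1 A2 A3 x j0 q)
              / (alphaFun A1 A2 A3 x j0) ^ 2 * Kfun A1 A2 A3 x j0 p
            + (alphaFun A1 A2 A3 x j0)⁻¹
              * (Ablock A1 A2 A3 j0 p i * Kfun A1 A2 A3 x j0 p)) * H p i0)) (x i) := by
    unfold Loss
    apply HasDerivAt.fun_sum; intro j0 _
    apply HasDerivAt.fun_sum; intro i0 _
    have h := ((hV j0 i0).fun_pow 2).const_mul (0.5 : ℝ)
    refine h.congr_deriv ?_
    rw [Function.update_eq_self]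
    ring
  -- it remains to identify the derivative value
  convert hL using 1
  -- matrix entry expansion
  have hMat : (A1ᵀ * Pmat A1 A2 A3 H E x * kron A2 A3) i.1 i.2
      = ∑ j0, ∑ p, Ablock A1 A2 A3 j0 p i * Pvec A1 A2 A3 H E x j0 p := by
    simp only [Matrix.mul_apply, Matrix.transpose_apply, Pmat, kron, Matrix.of_apply,
      Finset.sum_mul, Ablock]
    rw [Finset.sum_comm]
    exact Finset.sum_congr rfl fun j0 _ => Finset.sum_congr rfl fun p _ => by ring
  -- Pvec closed form
  have hP : ∀ (j0 : Fin n) (p : Fin n × Fin n),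
      Pvec A1 A2 A3 H E x j0 p
        = Ffun A1 A2 A3 x j0 p * Wvec A1 A2 A3 H E x j0 p
          - Ffun A1 A2 A3 x j0 p * ∑ q, Ffun A1 A2 A3 x j0 q * Wvec A1 A2 A3 H E x j0 q := by
    intro j0 p
    simp only [Pvec, Matrix.mulVec, dotProduct, Matrix.sub_apply, Matrix.diagonal_apply,
      Matrix.vecMulVec_apply, sub_mul, ite_mul, zero_mul, Finset.sum_sub_distrib,
      Finset.sum_ite_eq, Finset.mem_univ, if_true]
    rw [Finset.mul_sum]
    congr 1
    exact Finset.sum_congr rfl fun q _ => by ring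
  -- swap i0 and p sums on the derivative side
  have hRHS : ∀ j0 : Fin n,
      (∑ i0, Vval A1 A2 A3 H E x j0 i0 *
        (∑ p, (-(∑ q, Ablock A1 A2 A3 j0 q i * Kfun A1 A2 A3 x j0 q)
              / (alphaFun A1 A2 A3 x j0) ^ 2 * Kfun A1 A2 A3 x j0 p
            + (alphaFun A1 A2 A3 x j0)⁻¹
              * (Ablock A1 A2 A3 j0 p i * Kfun A1 A2 A3 x j0 p)) * H p i0))
      = ∑ p, (-(∑ q, Ablock A1 A2 A3 j0 q i * Kfun A1 A2 A3 x j0 q)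
              / (alphaFun A1 A2 A3 x j0) ^ 2 * Kfun A1 A2 A3 x j0 p
            + (alphaFun A1 A2 A3 x j0)⁻¹
              * (Ablock A1 A2 A3 j0 p i * Kfun A1 A2 A3 x j0 p))
          * Wvec A1 A2 A3 H E x j0 p := by
    intro j0
    simp only [Finset.mul_sum, Wvec]
    rw [Finset.sum_comm]
    exact Finset.sum_congr rfl fun p _ =>
      Finset.sum_congr rfl fun i0 _ => by ring
  -- key per-row identity
  have key : ∀ j0 : Fin n,
      (∑ p, (-(∑ q, Ablock A1 A2 A3 j0 q i * Kfun A1 A2 A3 x j0 q)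
              / (alphaFun A1 A2 A3 x j0) ^ 2 * Kfun A1 A2 A3 x j0 p
            + (alphaFun A1 A2 A3 x j0)⁻¹
              * (Ablock A1 A2 A3 j0 p i * Kfun A1 A2 A3 x j0 p))
          * Wvec A1 A2 A3 H E x j0 p)
      = ∑ p, Ablock A1 A2 A3 j0 p i * Pvec A1 A2 A3 H E x j0 p := by
    intro j0
    refine (key_scalar (alphaFun A1 A2 A3 x j0) (hαpos x j0).ne'
      (fun p => Ablock A1 A2 A3 j0 p i) (fun p => Kfun A1 A2 A3 x j0 p)
      (fun p => Wvec A1 A2 A3 H E x j0 p)).trans ?_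
    exact Finset.sum_congr rfl fun p _ => by
      rw [hP j0 p]; simp only [Ffun]
  rw [hMat]
  exact Finset.sum_congr rfl fun j0 _ => by rw [hRHS j0, ← key j0]
end

section
/- First derivative bound for the attention loss curve: let H ∈ ℝ^{n×n²} be a fixed matrix with all entries in the interval [1, B_a] and such that in each row at least half of the entries equal B_a, and let V ∈ ℝ^{n²×d} have all entries in {0,1}. For λ ∈ ℝ, let M_λ := exp(λH) ∈ ℝ^{n×n²} (entrywise exponential) and define f(λ) := ‖diag(M_λ 1_{n²})^{−1} M_λ V‖_F². Then f is differentiable on ℝ and for every λ ∈ ℝ, |f′(λ)| ≤ 8 · B_a · n · d. -/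
open Matrix

/-- First derivative bound for the attention loss curve: with `H ∈ ℝ^{n×n²}` having entries
in `[1, B_a]` and at least half of each row equal to `B_a`, `V ∈ ℝ^{n²×d}` with `{0,1}`
entries, `M_λ := exp(λH)` entrywise, and `f(λ) := ‖diag(M_λ 1)⁻¹ M_λ V‖_F²`, the function
`f` is differentiable and `|f′(λ)| ≤ 8 B_a n d` for every `λ ∈ ℝ`. -/
theorem attention_curve_first_derivative_bound {n d : ℕ} (Ba : ℝ) (hBa : 1 ≤ Ba)
    (H : Matrix (Fin n) (Fin n × Fin n) ℝ)
    (hH : ∀ i j, 1 ≤ H i j ∧ H i j ≤ Ba)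
    (hHalf : ∀ i : Fin n, n ^ 2 ≤ 2 * (Finset.univ.filter fun j => H i j = Ba).card)
    (V : Matrix (Fin n × Fin n) (Fin d) ℝ)
    (hV : ∀ i j, V i j = 0 ∨ V i j = 1)
    (f : ℝ → ℝ)
    (hf : f = fun lam : ℝ =>
      ∑ i, ∑ l,
        (((Matrix.diagonal
              ((Matrix.of fun i j => Real.exp (lam * H i j)).mulVec 1))⁻¹
            * (Matrix.of fun i j => Real.exp (lam * H i j)) * V) i l) ^ 2) :
    Differentiable ℝ f ∧ ∀ lam : ℝ, |deriv f lam| ≤ 8 * Ba * n * d := by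
  classical
  have key : ∀ (lam : ℝ) (i : Fin n) (l : Fin d),
      ((Matrix.diagonal ((Matrix.of fun i j => Real.exp (lam * H i j)).mulVec 1))⁻¹
          * (Matrix.of fun i j => Real.exp (lam * H i j)) * V) i l
        = (∑ j, Real.exp (lam * H i j) * V j l) / (∑ j, Real.exp (lam * H i j)) := by
    intro lam i l
    have hne : Nonempty (Fin n × Fin n) := ⟨(i, i)⟩
    have hw : ((Matrix.of fun i j => Real.exp (lam * H i j)).mulVec 1)
        = fun k => ∑ j, Real.exp (lam * H k j) := by
      rw [Matrix.mulVec_one]; ext k; exact Finset.sum_apply _ _ _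
    have hdiag : (Matrix.diagonal ((Matrix.of fun i j => Real.exp (lam * H i j)).mulVec 1))⁻¹
        = Matrix.diagonal (fun k => (∑ j, Real.exp (lam * H k j))⁻¹) := by
      rw [hw]
      apply Matrix.inv_eq_right_inv
      rw [Matrix.diagonal_mul_diagonal]
      have h1 : (fun k => (∑ j, Real.exp (lam * H k j)) * (∑ j, Real.exp (lam * H k j))⁻¹)
          = fun _ : Fin n => (1:ℝ) := funext fun k => mul_inv_cancel₀
            (Finset.sum_pos (fun j _ => Real.exp_pos _) Finset.univ_nonempty).ne'
      rw [h1, Matrix.diagonal_one]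
    rw [hdiag, Matrix.mul_assoc, Matrix.diagonal_mul, Matrix.mul_apply]
    simp only [Matrix.of_apply]
    rw [inv_mul_eq_div]
  have hfeq : f = fun lam => ∑ i, ∑ l,
      ((∑ j, Real.exp (lam * H i j) * V j l) / (∑ j, Real.exp (lam * H i j))) ^ 2 := by
    rw [hf]
    funext lam
    exact Finset.sum_congr rfl fun i _ => Finset.sum_congr rfl fun l _ => by rw [key]
  have main : ∀ lam : ℝ, HasDerivAt f (∑ i, ∑ l,
      2 * ((∑ j, Real.exp (lam * H i j) * V j l) / (∑ j, Real.exp (lam * H i j))) *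
        (((∑ j, Real.exp (lam * H i j) * H i j * V j l) * (∑ j, Real.exp (lam * H i j))
          - (∑ j, Real.exp (lam * H i j) * V j l) * (∑ j, Real.exp (lam * H i j) * H i j))
          / (∑ j, Real.exp (lam * H i j)) ^ 2)) lam := by
    intro lam
    rw [hfeq]
    apply HasDerivAt.fun_sum
    intro i _
    apply HasDerivAt.fun_sum
    intro l _
    have hne : Nonempty (Fin n × Fin n) := ⟨(i, i)⟩
    have hTpos : 0 < ∑ j, Real.exp (lam * H i j) :=
      Finset.sum_pos (fun j _ => Real.exp_pos _) Finset.univ_nonempty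
    have hS : HasDerivAt (fun x => ∑ j, Real.exp (x * H i j) * V j l)
        (∑ j, Real.exp (lam * H i j) * H i j * V j l) lam := by
      apply HasDerivAt.fun_sum
      intro j _
      exact ((hasDerivAt_mul_const (H i j)).exp).mul_const (V j l)
    have hT : HasDerivAt (fun x => ∑ j, Real.exp (x * H i j))
        (∑ j, Real.exp (lam * H i j) * H i j) lam := by
      apply HasDerivAt.fun_sum
      intro j _
      exact (hasDerivAt_mul_const (H i j)).exp
    have h2 := (hS.div hT hTpos.ne').pow 2
    convert h2 using 1
    · rfl
    · rfl
    simp only [Pi.div_apply]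
    push_cast
    ring
  refine ⟨fun lam => (main lam).differentiableAt, fun lam => ?_⟩
  rw [(main lam).deriv]
  have hn : (0:ℝ) ≤ (n : ℝ) := Nat.cast_nonneg n
  have hd : (0:ℝ) ≤ (d : ℝ) := Nat.cast_nonneg d
  have termbound : ∀ (i : Fin n) (l : Fin d),
      |2 * ((∑ j, Real.exp (lam * H i j) * V j l) / (∑ j, Real.exp (lam * H i j))) *
        (((∑ j, Real.exp (lam * H i j) * H i j * V j l) * (∑ j, Real.exp (lam * H i j))
          - (∑ j, Real.exp (lam * H i j) * V j l) * (∑ j, Real.exp (lam * H i j) * H i j))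
          / (∑ j, Real.exp (lam * H i j)) ^ 2)| ≤ 2 * Ba := by
    intro i l
    have hne : Nonempty (Fin n × Fin n) := ⟨(i, i)⟩
    set S := ∑ j, Real.exp (lam * H i j) * V j l with hSdef
    set T := ∑ j, Real.exp (lam * H i j) with hTdef
    set S' := ∑ j, Real.exp (lam * H i j) * H i j * V j l with hS'def
    set T' := ∑ j, Real.exp (lam * H i j) * H i j with hT'def
    have hTpos : 0 < T :=
      Finset.sum_pos (fun j _ => Real.exp_pos _) Finset.univ_nonempty
    have hV01 : ∀ j, 0 ≤ V j l ∧ V j l ≤ 1 := by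
      intro j
      rcases hV j l with h | h <;> simp [h]
    have hSnonneg : 0 ≤ S :=
      Finset.sum_nonneg fun j _ => mul_nonneg (Real.exp_pos _).le (hV01 j).1
    have hSleT : S ≤ T := by
      apply Finset.sum_le_sum
      intro j _
      calc Real.exp (lam * H i j) * V j l ≤ Real.exp (lam * H i j) * 1 := by
            exact mul_le_mul_of_nonneg_left (hV01 j).2 (Real.exp_pos _).le
        _ = Real.exp (lam * H i j) := mul_one _
    have hS'nonneg : 0 ≤ S' :=
      Finset.sum_nonneg fun j _ => mul_nonneg
        (mul_nonneg (Real.exp_pos _).le (le_trans zero_le_one (hH i j).1)) (hV01 j).1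
    have hS'le : S' ≤ Ba * T := by
      rw [hTdef, Finset.mul_sum]
      apply Finset.sum_le_sum
      intro j _
      calc Real.exp (lam * H i j) * H i j * V j l
          ≤ Real.exp (lam * H i j) * H i j * 1 :=
            mul_le_mul_of_nonneg_left (hV01 j).2
              (mul_nonneg (Real.exp_pos _).le (le_trans zero_le_one (hH i j).1))
        _ = Real.exp (lam * H i j) * H i j := mul_one _
        _ ≤ Real.exp (lam * H i j) * Ba :=
            mul_le_mul_of_nonneg_left (hH i j).2 (Real.exp_pos _).le
        _ = Ba * Real.exp (lam * H i j) := mul_comm _ _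
    have hT'nonneg : 0 ≤ T' :=
      Finset.sum_nonneg fun j _ =>
        mul_nonneg (Real.exp_pos _).le (le_trans zero_le_one (hH i j).1)
    have hT'le : T' ≤ Ba * T := by
      rw [hTdef, Finset.mul_sum]
      apply Finset.sum_le_sum
      intro j _
      calc Real.exp (lam * H i j) * H i j ≤ Real.exp (lam * H i j) * Ba :=
            mul_le_mul_of_nonneg_left (hH i j).2 (Real.exp_pos _).le
        _ = Ba * Real.exp (lam * H i j) := mul_comm _ _
    have hg0 : 0 ≤ S / T := div_nonneg hSnonneg hTpos.le
    have hg1 : S / T ≤ 1 := (div_le_one hTpos).mpr hSleT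
    have hnum : |S' * T - S * T'| ≤ Ba * T ^ 2 := by
      rw [abs_le]
      constructor
      · nlinarith [mul_nonneg hS'nonneg hTpos.le, mul_le_mul_of_nonneg_left hT'le hSnonneg,
          mul_le_mul_of_nonneg_right hSleT (mul_nonneg (le_trans zero_le_one hBa) hTpos.le)]
      · nlinarith [mul_nonneg hSnonneg hT'nonneg, mul_le_mul_of_nonneg_right hS'le hTpos.le]
    have hq : |(S' * T - S * T') / T ^ 2| ≤ Ba := by
      rw [abs_div, abs_of_pos (pow_pos hTpos 2)]
      rw [div_le_iff₀ (pow_pos hTpos 2)]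
      calc |S' * T - S * T'| ≤ Ba * T ^ 2 := hnum
        _ = Ba * T ^ 2 := rfl
    calc |2 * (S / T) * ((S' * T - S * T') / T ^ 2)|
        = 2 * (S / T) * |(S' * T - S * T') / T ^ 2| := by
          rw [abs_mul, abs_of_nonneg (by positivity : (0:ℝ) ≤ 2 * (S / T))]
      _ ≤ 2 * 1 * Ba := by
          apply mul_le_mul
          · linarith
          · exact hq
          · exact abs_nonneg _
          · norm_num
      _ = 2 * Ba := by ring
  calc |∑ i, ∑ l,
      2 * ((∑ j, Real.exp (lam * H i j) * V j l) / (∑ j, Real.exp (lam * H i j))) *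
        (((∑ j, Real.exp (lam * H i j) * H i j * V j l) * (∑ j, Real.exp (lam * H i j))
          - (∑ j, Real.exp (lam * H i j) * V j l) * (∑ j, Real.exp (lam * H i j) * H i j))
          / (∑ j, Real.exp (lam * H i j)) ^ 2)|
      ≤ ∑ i, ∑ l, |2 * ((∑ j, Real.exp (lam * H i j) * V j l) / (∑ j, Real.exp (lam * H i j))) *
        (((∑ j, Real.exp (lam * H i j) * H i j * V j l) * (∑ j, Real.exp (lam * H i j))
          - (∑ j, Real.exp (lam * H i j) * V j l) * (∑ j, Real.exp (lam * H i j) * H i j))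
          / (∑ j, Real.exp (lam * H i j)) ^ 2)| :=
        (Finset.abs_sum_le_sum_abs _ _).trans
          (Finset.sum_le_sum fun i _ => Finset.abs_sum_le_sum_abs _ _)
    _ ≤ ∑ _i : Fin n, ∑ _l : Fin d, 2 * Ba :=
        Finset.sum_le_sum fun i _ => Finset.sum_le_sum fun l _ => termbound i l
    _ = (n : ℝ) * ((d : ℝ) * (2 * Ba)) := by
        simp [Finset.sum_const, Finset.card_univ, mul_assoc]
    _ ≤ 8 * Ba * n * d := by nlinarith [mul_nonneg hn hd, le_trans zero_le_one hBa]
end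

section
/- Second derivative bound for the attention loss curve: there exists an absolute constant C > 0 such that the following holds. Let H ∈ ℝ^{n×n²} be a fixed matrix with all entries in the interval [1, B_a] and such that in each row at least half of the entries equal B_a, and let V ∈ ℝ^{n²×d} have all entries in {0,1}. For λ ∈ ℝ, let M_λ := exp(λH) ∈ ℝ^{n×n²} (entrywise exponential) and define f(λ) := ‖diag(M_λ 1_{n²})^{−1} M_λ V‖_F². Then f is twice differentiable on ℝ and for every λ ∈ ℝ, |f″(λ)| ≤ C · B_a² · n · d. -/
open Matrix

namespace AttnAux

variable {n d : ℕ}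

noncomputable def DD (H : Matrix (Fin n) (Fin n × Fin n) ℝ) (i : Fin n) (lam : ℝ) : ℝ :=
  ∑ j, Real.exp (lam * H i j)
noncomputable def DD1 (H : Matrix (Fin n) (Fin n × Fin n) ℝ) (i : Fin n) (lam : ℝ) : ℝ :=
  ∑ j, Real.exp (lam * H i j) * H i j
noncomputable def DD2 (H : Matrix (Fin n) (Fin n × Fin n) ℝ) (i : Fin n) (lam : ℝ) : ℝ :=
  ∑ j, Real.exp (lam * H i j) * H i j * H i j
noncomputable def NN (H : Matrix (Fin n) (Fin n × Fin n) ℝ)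
    (V : Matrix (Fin n × Fin n) (Fin d) ℝ) (i : Fin n) (l : Fin d) (lam : ℝ) : ℝ :=
  ∑ j, Real.exp (lam * H i j) * V j l
noncomputable def NN1 (H : Matrix (Fin n) (Fin n × Fin n) ℝ)
    (V : Matrix (Fin n × Fin n) (Fin d) ℝ) (i : Fin n) (l : Fin d) (lam : ℝ) : ℝ :=
  ∑ j, Real.exp (lam * H i j) * H i j * V j l
noncomputable def NN2 (H : Matrix (Fin n) (Fin n × Fin n) ℝ)
    (V : Matrix (Fin n × Fin n) (Fin d) ℝ) (i : Fin n) (l : Fin d) (lam : ℝ) : ℝ :=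
  ∑ j, Real.exp (lam * H i j) * H i j * H i j * V j l
noncomputable def S (H : Matrix (Fin n) (Fin n × Fin n) ℝ)
    (V : Matrix (Fin n × Fin n) (Fin d) ℝ) (i : Fin n) (l : Fin d) (lam : ℝ) : ℝ :=
  NN H V i l lam / DD H i lam
noncomputable def S1 (H : Matrix (Fin n) (Fin n × Fin n) ℝ)
    (V : Matrix (Fin n × Fin n) (Fin d) ℝ) (i : Fin n) (l : Fin d) (lam : ℝ) : ℝ :=
  (NN1 H V i l lam * DD H i lam - NN H V i l lam * DD1 H i lam) / DD H i lam ^ 2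
noncomputable def S2 (H : Matrix (Fin n) (Fin n × Fin n) ℝ)
    (V : Matrix (Fin n × Fin n) (Fin d) ℝ) (i : Fin n) (l : Fin d) (lam : ℝ) : ℝ :=
  ((NN2 H V i l lam * DD H i lam - NN H V i l lam * DD2 H i lam) * DD H i lam ^ 2
    - (NN1 H V i l lam * DD H i lam - NN H V i l lam * DD1 H i lam)
      * (2 * DD H i lam * DD1 H i lam)) / (DD H i lam ^ 2) ^ 2

variable (H : Matrix (Fin n) (Fin n × Fin n) ℝ) (V : Matrix (Fin n × Fin n) (Fin d) ℝ)
  (i : Fin n) (l : Fin d) (lam : ℝ)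

lemma hasDerivAt_DD : HasDerivAt (DD H i) (DD1 H i lam) lam :=
  HasDerivAt.fun_sum fun j _ => (hasDerivAt_mul_const (H i j)).exp

lemma hasDerivAt_DD1 : HasDerivAt (DD1 H i) (DD2 H i lam) lam :=
  HasDerivAt.fun_sum fun j _ => ((hasDerivAt_mul_const (H i j)).exp).mul_const (H i j)

lemma hasDerivAt_NN : HasDerivAt (NN H V i l) (NN1 H V i l lam) lam :=
  HasDerivAt.fun_sum fun j _ =>
    (((hasDerivAt_mul_const (H i j)).exp).mul_const (V j l)).congr_deriv (by ring)

lemma hasDerivAt_NN1 : HasDerivAt (NN1 H V i l) (NN2 H V i l lam) lam :=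
  HasDerivAt.fun_sum fun j _ =>
    ((((hasDerivAt_mul_const (H i j)).exp).mul_const (H i j)).mul_const (V j l))

lemma hasDerivAt_S (hD : DD H i lam ≠ 0) :
    HasDerivAt (S H V i l) (S1 H V i l lam) lam :=
  (hasDerivAt_NN H V i l lam).div (hasDerivAt_DD H i lam) hD

lemma hasDerivAt_S1 (hD : DD H i lam ≠ 0) :
    HasDerivAt (S1 H V i l) (S2 H V i l lam) lam := by
  have hnum : HasDerivAt (fun lam => NN1 H V i l lam * DD H i lam - NN H V i l lam * DD1 H i lam)
      (NN2 H V i l lam * DD H i lam + NN1 H V i l lam * DD1 H i lam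
        - (NN1 H V i l lam * DD1 H i lam + NN H V i l lam * DD2 H i lam)) lam :=
    ((hasDerivAt_NN1 H V i l lam).mul (hasDerivAt_DD H i lam)).sub
      ((hasDerivAt_NN H V i l lam).mul (hasDerivAt_DD1 H i lam))
  have hden : HasDerivAt (fun lam => DD H i lam ^ 2)
      ((2 : ℕ) * DD H i lam ^ (2 - 1) * DD1 H i lam) lam := (hasDerivAt_DD H i lam).pow 2
  have h := hnum.div hden (pow_ne_zero 2 hD)
  refine h.congr_deriv ?_
  unfold S2
  push_cast
  ring

variable {Ba : ℝ}

lemma DD_pos (hn : 0 < n) : 0 < DD H i lam := by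
  have : Nonempty (Fin n × Fin n) := ⟨(⟨0, hn⟩, ⟨0, hn⟩)⟩
  exact Finset.sum_pos (fun j _ => Real.exp_pos _) Finset.univ_nonempty

lemma V_mem (hV : ∀ j l, V j l = 0 ∨ V j l = 1) (j : Fin n × Fin n) (l : Fin d) :
    0 ≤ V j l ∧ V j l ≤ 1 := by
  rcases hV j l with h | h <;> rw [h] <;> norm_num

lemma NN_nonneg (hV : ∀ j l, V j l = 0 ∨ V j l = 1) : 0 ≤ NN H V i l lam :=
  Finset.sum_nonneg fun j _ =>
    mul_nonneg (Real.exp_pos _).le (V_mem V hV j l).1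

lemma NN_le_DD (hV : ∀ j l, V j l = 0 ∨ V j l = 1) : NN H V i l lam ≤ DD H i lam :=
  Finset.sum_le_sum fun j _ =>
    mul_le_of_le_one_right (Real.exp_pos _).le (V_mem V hV j l).2

lemma NN1_nonneg (hH : ∀ i j, 1 ≤ H i j ∧ H i j ≤ Ba)
    (hV : ∀ j l, V j l = 0 ∨ V j l = 1) : 0 ≤ NN1 H V i l lam :=
  Finset.sum_nonneg fun j _ =>
    mul_nonneg (mul_nonneg (Real.exp_pos _).le (by linarith [(hH i j).1]))
      (V_mem V hV j l).1

lemma NN1_le (hH : ∀ i j, 1 ≤ H i j ∧ H i j ≤ Ba)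
    (hV : ∀ j l, V j l = 0 ∨ V j l = 1) : NN1 H V i l lam ≤ Ba * DD H i lam := by
  unfold NN1 DD
  rw [Finset.mul_sum]
  refine Finset.sum_le_sum fun j _ => ?_
  obtain ⟨h1, h2⟩ := hH i j
  obtain ⟨v1, v2⟩ := V_mem V hV j l
  have he := Real.exp_pos (lam * H i j)
  calc Real.exp (lam * H i j) * H i j * V j l
      ≤ Real.exp (lam * H i j) * Ba * 1 :=
        mul_le_mul (mul_le_mul_of_nonneg_left h2 he.le) v2 v1
          (mul_nonneg he.le (by linarith))
    _ = Ba * Real.exp (lam * H i j) := by ring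

lemma NN2_nonneg (hH : ∀ i j, 1 ≤ H i j ∧ H i j ≤ Ba)
    (hV : ∀ j l, V j l = 0 ∨ V j l = 1) : 0 ≤ NN2 H V i l lam :=
  Finset.sum_nonneg fun j _ => by
    obtain ⟨h1, _⟩ := hH i j
    obtain ⟨v1, _⟩ := V_mem V hV j l
    have he := (Real.exp_pos (lam * H i j)).le
    positivity

lemma NN2_le (hH : ∀ i j, 1 ≤ H i j ∧ H i j ≤ Ba)
    (hV : ∀ j l, V j l = 0 ∨ V j l = 1) : NN2 H V i l lam ≤ Ba ^ 2 * DD H i lam := by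
  unfold NN2 DD
  rw [Finset.mul_sum]
  refine Finset.sum_le_sum fun j _ => ?_
  obtain ⟨h1, h2⟩ := hH i j
  obtain ⟨v1, v2⟩ := V_mem V hV j l
  have he := Real.exp_pos (lam * H i j)
  have h0 : (0:ℝ) ≤ H i j := by linarith
  have hsq : H i j * H i j ≤ Ba ^ 2 := by nlinarith
  calc Real.exp (lam * H i j) * H i j * H i j * V j l
      ≤ Real.exp (lam * H i j) * H i j * H i j * 1 :=
        mul_le_mul_of_nonneg_left v2 (mul_nonneg (mul_nonneg he.le h0) h0)
    _ = Real.exp (lam * H i j) * (H i j * H i j) := by ring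
    _ ≤ Real.exp (lam * H i j) * Ba ^ 2 := mul_le_mul_of_nonneg_left hsq he.le
    _ = Ba ^ 2 * Real.exp (lam * H i j) := by ring

lemma DD1_nonneg (hH : ∀ i j, 1 ≤ H i j ∧ H i j ≤ Ba) : 0 ≤ DD1 H i lam :=
  Finset.sum_nonneg fun j _ =>
    mul_nonneg (Real.exp_pos _).le (by linarith [(hH i j).1])

lemma DD1_le (hH : ∀ i j, 1 ≤ H i j ∧ H i j ≤ Ba) : DD1 H i lam ≤ Ba * DD H i lam := by
  unfold DD1 DD
  rw [Finset.mul_sum]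
  refine Finset.sum_le_sum fun j _ => ?_
  obtain ⟨h1, h2⟩ := hH i j
  have he := Real.exp_pos (lam * H i j)
  calc Real.exp (lam * H i j) * H i j ≤ Real.exp (lam * H i j) * Ba :=
        mul_le_mul_of_nonneg_left h2 he.le
    _ = Ba * Real.exp (lam * H i j) := by ring

lemma DD2_nonneg (hH : ∀ i j, 1 ≤ H i j ∧ H i j ≤ Ba) : 0 ≤ DD2 H i lam :=
  Finset.sum_nonneg fun j _ => by
    obtain ⟨h1, _⟩ := hH i j
    have he := (Real.exp_pos (lam * H i j)).le
    positivity

lemma DD2_le (hH : ∀ i j, 1 ≤ H i j ∧ H i j ≤ Ba) : DD2 H i lam ≤ Ba ^ 2 * DD H i lam := by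
  unfold DD2 DD
  rw [Finset.mul_sum]
  refine Finset.sum_le_sum fun j _ => ?_
  obtain ⟨h1, h2⟩ := hH i j
  have he := Real.exp_pos (lam * H i j)
  have h0 : (0:ℝ) ≤ H i j := by linarith
  have hsq : H i j * H i j ≤ Ba ^ 2 := by nlinarith
  calc Real.exp (lam * H i j) * H i j * H i j
      = Real.exp (lam * H i j) * (H i j * H i j) := by ring
    _ ≤ Real.exp (lam * H i j) * Ba ^ 2 := mul_le_mul_of_nonneg_left hsq he.le
    _ = Ba ^ 2 * Real.exp (lam * H i j) := by ring

lemma abs_S_le (hn : 0 < n) (hV : ∀ j l, V j l = 0 ∨ V j l = 1) :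
    |S H V i l lam| ≤ 1 := by
  have hD := DD_pos H i lam hn
  rw [S, abs_div, abs_of_nonneg (NN_nonneg H V i l lam hV), abs_of_pos hD]
  exact (div_le_one hD).mpr (NN_le_DD H V i l lam hV)

lemma numS1_abs (hn : 0 < n) (hBa : 1 ≤ Ba) (hH : ∀ i j, 1 ≤ H i j ∧ H i j ≤ Ba)
    (hV : ∀ j l, V j l = 0 ∨ V j l = 1) :
    |NN1 H V i l lam * DD H i lam - NN H V i l lam * DD1 H i lam| ≤ 2 * Ba * DD H i lam ^ 2 := by
  have hD := DD_pos H i lam hn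
  have a1 : NN1 H V i l lam * DD H i lam ≤ Ba * DD H i lam * DD H i lam :=
    mul_le_mul_of_nonneg_right (NN1_le H V i l lam hH hV) hD.le
  have a2 : NN H V i l lam * DD1 H i lam ≤ DD H i lam * (Ba * DD H i lam) :=
    mul_le_mul (NN_le_DD H V i l lam hV) (DD1_le H i lam hH) (DD1_nonneg H i lam hH) hD.le
  have a3 : 0 ≤ NN1 H V i l lam * DD H i lam :=
    mul_nonneg (NN1_nonneg H V i l lam hH hV) hD.le
  have a4 : 0 ≤ NN H V i l lam * DD1 H i lam :=
    mul_nonneg (NN_nonneg H V i l lam hV) (DD1_nonneg H i lam hH)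
  rw [abs_le]
  constructor <;> nlinarith [sq_nonneg (DD H i lam)]

lemma abs_S1_le (hn : 0 < n) (hBa : 1 ≤ Ba) (hH : ∀ i j, 1 ≤ H i j ∧ H i j ≤ Ba)
    (hV : ∀ j l, V j l = 0 ∨ V j l = 1) :
    |S1 H V i l lam| ≤ 2 * Ba := by
  have hD := DD_pos H i lam hn
  have hD2 : (0:ℝ) < DD H i lam ^ 2 := pow_pos hD 2
  rw [S1, abs_div, abs_of_pos hD2, div_le_iff₀ hD2]
  calc |NN1 H V i l lam * DD H i lam - NN H V i l lam * DD1 H i lam|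
      ≤ 2 * Ba * DD H i lam ^ 2 := numS1_abs H V i l lam hn hBa hH hV
    _ = 2 * Ba * DD H i lam ^ 2 := rfl

lemma numS2_abs (hn : 0 < n) (hBa : 1 ≤ Ba) (hH : ∀ i j, 1 ≤ H i j ∧ H i j ≤ Ba)
    (hV : ∀ j l, V j l = 0 ∨ V j l = 1) :
    |NN2 H V i l lam * DD H i lam - NN H V i l lam * DD2 H i lam|
      ≤ 2 * Ba ^ 2 * DD H i lam ^ 2 := by
  have hD := DD_pos H i lam hn
  have a1 : NN2 H V i l lam * DD H i lam ≤ Ba ^ 2 * DD H i lam * DD H i lam :=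
    mul_le_mul_of_nonneg_right (NN2_le H V i l lam hH hV) hD.le
  have a2 : NN H V i l lam * DD2 H i lam ≤ DD H i lam * (Ba ^ 2 * DD H i lam) :=
    mul_le_mul (NN_le_DD H V i l lam hV) (DD2_le H i lam hH) (DD2_nonneg H i lam hH) hD.le
  have a3 : 0 ≤ NN2 H V i l lam * DD H i lam :=
    mul_nonneg (NN2_nonneg H V i l lam hH hV) hD.le
  have a4 : 0 ≤ NN H V i l lam * DD2 H i lam :=
    mul_nonneg (NN_nonneg H V i l lam hV) (DD2_nonneg H i lam hH)
  rw [abs_le]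
  constructor <;> nlinarith [sq_nonneg (DD H i lam)]

lemma abs_S2_le (hn : 0 < n) (hBa : 1 ≤ Ba) (hH : ∀ i j, 1 ≤ H i j ∧ H i j ≤ Ba)
    (hV : ∀ j l, V j l = 0 ∨ V j l = 1) :
    |S2 H V i l lam| ≤ 6 * Ba ^ 2 := by
  have hD := DD_pos H i lam hn
  have hD2 : (0:ℝ) < DD H i lam ^ 2 := pow_pos hD 2
  have hD4 : (0:ℝ) < (DD H i lam ^ 2) ^ 2 := pow_pos hD2 2
  have hA := numS2_abs H V i l lam hn hBa hH hV
  have hB := numS1_abs H V i l lam hn hBa hH hV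
  have hBa0 : (0:ℝ) < Ba := by linarith
  have hD1le := DD1_le H i lam hH
  have hD1nn := DD1_nonneg H i lam hH
  rw [S2, abs_div, abs_of_pos hD4, div_le_iff₀ hD4]
  have tri : |NN2 H V i l lam * DD H i lam - NN H V i l lam * DD2 H i lam|
      * DD H i lam ^ 2
      + |NN1 H V i l lam * DD H i lam - NN H V i l lam * DD1 H i lam|
        * (2 * DD H i lam * DD1 H i lam) ≤ 6 * Ba ^ 2 * (DD H i lam ^ 2) ^ 2 := by
    have b1 : |NN2 H V i l lam * DD H i lam - NN H V i l lam * DD2 H i lam| * DD H i lam ^ 2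
        ≤ 2 * Ba ^ 2 * DD H i lam ^ 2 * DD H i lam ^ 2 :=
      mul_le_mul_of_nonneg_right hA hD2.le
    have c1 : 2 * DD H i lam * DD1 H i lam ≤ 2 * DD H i lam * (Ba * DD H i lam) :=
      mul_le_mul_of_nonneg_left hD1le (by positivity)
    have b2 : |NN1 H V i l lam * DD H i lam - NN H V i l lam * DD1 H i lam|
        * (2 * DD H i lam * DD1 H i lam)
        ≤ 2 * Ba * DD H i lam ^ 2 * (2 * DD H i lam * (Ba * DD H i lam)) :=
      mul_le_mul hB c1 (by positivity) (by positivity)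
    nlinarith [sq_nonneg (DD H i lam), sq_nonneg Ba]
  calc |(NN2 H V i l lam * DD H i lam - NN H V i l lam * DD2 H i lam) * DD H i lam ^ 2
        - (NN1 H V i l lam * DD H i lam - NN H V i l lam * DD1 H i lam)
          * (2 * DD H i lam * DD1 H i lam)|
      ≤ |(NN2 H V i l lam * DD H i lam - NN H V i l lam * DD2 H i lam) * DD H i lam ^ 2|
        + |(NN1 H V i l lam * DD H i lam - NN H V i l lam * DD1 H i lam)
          * (2 * DD H i lam * DD1 H i lam)| := abs_sub _ _
    _ = |NN2 H V i l lam * DD H i lam - NN H V i l lam * DD2 H i lam| * DD H i lam ^ 2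
        + |NN1 H V i l lam * DD H i lam - NN H V i l lam * DD1 H i lam|
          * (2 * DD H i lam * DD1 H i lam) := by
        rw [abs_mul, abs_mul, abs_of_nonneg hD2.le,
          abs_of_nonneg (by positivity : (0:ℝ) ≤ 2 * DD H i lam * DD1 H i lam)]
    _ ≤ 6 * Ba ^ 2 * (DD H i lam ^ 2) ^ 2 := tri

lemma entry_eq (hn : 0 < n) :
    ((Matrix.diagonal ((Matrix.of fun i j => Real.exp (lam * H i j)).mulVec 1))⁻¹
      * (Matrix.of fun i j => Real.exp (lam * H i j)) * V) i l = S H V i l lam := by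
  set M : Matrix (Fin n) (Fin n × Fin n) ℝ := Matrix.of fun i j => Real.exp (lam * H i j)
    with hM
  set w : Fin n → ℝ := M.mulVec 1 with hw
  have hwi : ∀ i, w i = DD H i lam := by
    intro i
    simp [hw, hM, Matrix.mulVec, dotProduct, DD]
  have hw0 : ∀ i, w i ≠ 0 := fun i => by rw [hwi]; exact (DD_pos H i lam hn).ne'
  have hinv : (Matrix.diagonal w)⁻¹ = Matrix.diagonal (fun i => (w i)⁻¹) := by
    apply Matrix.inv_eq_right_inv
    rw [Matrix.diagonal_mul_diagonal]
    rw [show (fun i => w i * (w i)⁻¹) = fun _ => (1:ℝ) from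
      funext fun i => mul_inv_cancel₀ (hw0 i), Matrix.diagonal_one]
  rw [Matrix.mul_assoc, hinv, Matrix.diagonal_mul, Matrix.mul_apply, hwi, inv_mul_eq_div]
  rfl

noncomputable def F1 (H : Matrix (Fin n) (Fin n × Fin n) ℝ)
    (V : Matrix (Fin n × Fin n) (Fin d) ℝ) (lam : ℝ) : ℝ :=
  ∑ i, ∑ l, 2 * S H V i l lam * S1 H V i l lam

noncomputable def F2 (H : Matrix (Fin n) (Fin n × Fin n) ℝ)
    (V : Matrix (Fin n × Fin n) (Fin d) ℝ) (lam : ℝ) : ℝ :=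
  ∑ i, ∑ l, (2 * S1 H V i l lam * S1 H V i l lam + 2 * S H V i l lam * S2 H V i l lam)

lemma hasDerivAt_fsum (hn : 0 < n) :
    HasDerivAt (fun lam => ∑ i, ∑ l, S H V i l lam ^ 2) (F1 H V lam) lam := by
  unfold F1
  refine HasDerivAt.fun_sum fun i _ => HasDerivAt.fun_sum fun l _ => ?_
  have h := (hasDerivAt_S H V i l lam (DD_pos H i lam hn).ne').pow 2
  refine h.congr_deriv ?_
  push_cast
  ring

lemma hasDerivAt_F1 (hn : 0 < n) : HasDerivAt (F1 H V) (F2 H V lam) lam := by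
  unfold F1 F2
  refine HasDerivAt.fun_sum fun i _ => HasDerivAt.fun_sum fun l _ => ?_
  have hS := hasDerivAt_S H V i l lam (DD_pos H i lam hn).ne'
  have hS1 := hasDerivAt_S1 H V i l lam (DD_pos H i lam hn).ne'
  have h := (hS.const_mul 2).fun_mul hS1
  convert h using 1

end AttnAux

/-- Second derivative bound for the attention loss curve: there is an absolute constant
`C > 0` such that for all `n, d`, `B_a ≥ 1`, `H ∈ ℝ^{n×n²}` with entries in `[1, B_a]` and
at least half of each row equal to `B_a`, and `V ∈ ℝ^{n²×d}` with `{0,1}` entries, the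
function `f(λ) := ‖diag(M_λ 1)⁻¹ M_λ V‖_F²` (with `M_λ := exp(λH)` entrywise) is twice
differentiable and `|f″(λ)| ≤ C B_a² n d` for every `λ ∈ ℝ`. -/
theorem attention_curve_second_derivative_bound :
    ∃ C : ℝ, 0 < C ∧
      ∀ (n d : ℕ) (Ba : ℝ), 1 ≤ Ba →
        ∀ H : Matrix (Fin n) (Fin n × Fin n) ℝ,
          (∀ i j, 1 ≤ H i j ∧ H i j ≤ Ba) →
          (∀ i : Fin n, n ^ 2 ≤ 2 * (Finset.univ.filter fun j => H i j = Ba).card) →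
          ∀ V : Matrix (Fin n × Fin n) (Fin d) ℝ,
            (∀ i j, V i j = 0 ∨ V i j = 1) →
            ∀ f : ℝ → ℝ,
              (f = fun lam : ℝ =>
                ∑ i, ∑ l,
                  (((Matrix.diagonal
                        ((Matrix.of fun i j => Real.exp (lam * H i j)).mulVec 1))⁻¹
                      * (Matrix.of fun i j => Real.exp (lam * H i j)) * V) i l) ^ 2) →
              Differentiable ℝ f ∧ Differentiable ℝ (deriv f) ∧
                ∀ lam : ℝ, |deriv (deriv f) lam| ≤ C * Ba ^ 2 * n * d := by
  refine ⟨20, by norm_num, ?_⟩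
  intro n d Ba hBa H hH _ V hV f hf
  by_cases hn : 0 < n
  · -- main case
    have hfS : f = fun lam => ∑ i, ∑ l, AttnAux.S H V i l lam ^ 2 := by
      rw [hf]
      funext lam
      refine Finset.sum_congr rfl fun i _ => Finset.sum_congr rfl fun l _ => ?_
      rw [AttnAux.entry_eq H V i l lam hn]
    have hD : ∀ lam, HasDerivAt f (AttnAux.F1 H V lam) lam := by
      intro lam
      rw [hfS]
      exact AttnAux.hasDerivAt_fsum H V lam hn
    have hdf : deriv f = AttnAux.F1 H V := funext fun lam => (hD lam).deriv
    have hD2 : ∀ lam, HasDerivAt (deriv f) (AttnAux.F2 H V lam) lam := by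
      intro lam
      rw [hdf]
      exact AttnAux.hasDerivAt_F1 H V lam hn
    refine ⟨fun lam => (hD lam).differentiableAt, fun lam => (hD2 lam).differentiableAt, ?_⟩
    intro lam
    rw [(hD2 lam).deriv]
    have hterm : ∀ (i : Fin n) (l : Fin d),
        |2 * AttnAux.S1 H V i l lam * AttnAux.S1 H V i l lam
          + 2 * AttnAux.S H V i l lam * AttnAux.S2 H V i l lam| ≤ 20 * Ba ^ 2 := by
      intro i l
      have a := AttnAux.abs_S_le H V i l lam hn hV
      have b := AttnAux.abs_S1_le H V i l lam hn hBa hH hV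
      have c := AttnAux.abs_S2_le H V i l lam hn hBa hH hV
      have hBa0 : (0:ℝ) < Ba := by linarith
      calc |2 * AttnAux.S1 H V i l lam * AttnAux.S1 H V i l lam
            + 2 * AttnAux.S H V i l lam * AttnAux.S2 H V i l lam|
          ≤ |2 * AttnAux.S1 H V i l lam * AttnAux.S1 H V i l lam|
            + |2 * AttnAux.S H V i l lam * AttnAux.S2 H V i l lam| := abs_add_le _ _
        _ = 2 * (|AttnAux.S1 H V i l lam| * |AttnAux.S1 H V i l lam|)
            + 2 * (|AttnAux.S H V i l lam| * |AttnAux.S2 H V i l lam|) := by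
            rw [abs_mul, abs_mul, abs_mul, abs_mul, abs_two]
            ring
        _ ≤ 2 * ((2 * Ba) * (2 * Ba)) + 2 * (1 * (6 * Ba ^ 2)) := by
            gcongr <;> first | exact abs_nonneg _ | positivity
        _ = 20 * Ba ^ 2 := by ring
    calc |AttnAux.F2 H V lam|
        ≤ ∑ i, |∑ l, (2 * AttnAux.S1 H V i l lam * AttnAux.S1 H V i l lam
          + 2 * AttnAux.S H V i l lam * AttnAux.S2 H V i l lam)| :=
          Finset.abs_sum_le_sum_abs _ _
      _ ≤ ∑ i, ∑ l, |2 * AttnAux.S1 H V i l lam * AttnAux.S1 H V i l lam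
          + 2 * AttnAux.S H V i l lam * AttnAux.S2 H V i l lam| :=
          Finset.sum_le_sum fun i _ => Finset.abs_sum_le_sum_abs _ _
      _ ≤ ∑ _i : Fin n, ∑ _l : Fin d, 20 * Ba ^ 2 :=
          Finset.sum_le_sum fun i _ => Finset.sum_le_sum fun l _ => hterm i l
      _ = 20 * Ba ^ 2 * n * d := by
          simp [Finset.sum_const, Finset.card_univ, nsmul_eq_mul]
          ring
  · -- n = 0
    have hn0 : n = 0 := by omega
    subst hn0
    have hf0 : f = fun _ => (0:ℝ) := by
      rw [hf]
      funext lam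
      simp
    have h1 : deriv f = fun _ => (0:ℝ) := by
      rw [hf0]
      exact deriv_const' 0
    have h2 : deriv (deriv f) = fun _ => (0:ℝ) := by
      rw [h1]
      exact deriv_const' 0
    refine ⟨by rw [hf0]; exact differentiable_const _,
      by rw [h1]; exact differentiable_const _, ?_⟩
    intro lam
    rw [h2]
    simp
end
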